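/- Let C be a class of Kripke models enjoying n-IP for some natural number n. Then the logic of C has the uniform Lyndon interpolation property: for every modal formula φ and all finite sets P⁺, P⁻ of propositional variables, there exists a formula θ such that (1) φ→θ is satisfied at every world of every model in C, (2) v⁺(θ)⊆v⁺(φ)∖P⁺ and v⁻(θ)⊆v⁻(φ)∖P⁻, and (3) for every formula ψ such that φ→ψ is satisfied at every world of every model in C, v⁺(ψ)∩P⁺=∅ and v⁻(ψ)∩P⁻=∅, the formula θ→ψ is satisfied at every world of every model in C. -/

import Mathlib

/-- Modal formulas over countably many variables. -/
inductive ModalForm : Type where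
  | var : ℕ → ModalForm
  | bot : ModalForm
  | and : ModalForm → ModalForm → ModalForm
  | or : ModalForm → ModalForm → ModalForm
  | not : ModalForm → ModalForm
  | imp : ModalForm → ModalForm → ModalForm
  | box : ModalForm → ModalForm

namespace ModalForm

mutual
  /-- positively occurring variables -/
  def vpos : ModalForm → Finset ℕ
    | var p => {p}
    | bot => ∅
    | and φ ψ => vpos φ ∪ vpos ψ
    | or φ ψ => vpos φ ∪ vpos ψ
    | not φ => vneg φ
    | imp φ ψ => vneg φ ∪ vpos ψ
    | box φ => vpos φ
  /-- negatively occurring variables -/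
  def vneg : ModalForm → Finset ℕ
    | var _ => ∅
    | bot => ∅
    | and φ ψ => vneg φ ∪ vneg ψ
    | or φ ψ => vneg φ ∪ vneg ψ
    | not φ => vpos φ
    | imp φ ψ => vpos φ ∪ vneg ψ
    | box φ => vneg φ
end

/-- Modal depth: maximal nesting of `□`. -/
def depth : ModalForm → ℕ
  | var _ => 0
  | bot => 0
  | and φ ψ => max (depth φ) (depth ψ)
  | or φ ψ => max (depth φ) (depth ψ)
  | not φ => depth φ
  | imp φ ψ => max (depth φ) (depth ψ)
  | box φ => depth φ + 1

/-- `◇φ := ¬□¬φ` -/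
def dia (φ : ModalForm) : ModalForm := not (box (not φ))

/-- `⊤ := ¬⊥` -/
def top : ModalForm := not bot

end ModalForm

/-- An S4 Kripke frame: nonempty set of worlds with a reflexive transitive relation. -/
structure KFrame : Type 1 where
  W : Type
  R : W → W → Prop
  nonempty : Nonempty W
  refl : ∀ x, R x x
  trans : ∀ x y z, R x y → R y z → R x z

/-- A Kripke model: a frame with a valuation. -/
structure KModel : Type 1 extends KFrame where
  val : W → ℕ → Prop

/-- The model based on frame `F` with valuation `V`. -/
def KFrame.toModel (F : KFrame) (V : F.W → ℕ → Prop) : KModel :=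
  { toKFrame := F, val := V }

/-- Satisfaction in a Kripke model. -/
def KModel.Sat (M : KModel) : M.W → ModalForm → Prop
  | w, .var p => M.val w p
  | _, .bot => False
  | w, .and φ ψ => M.Sat w φ ∧ M.Sat w ψ
  | w, .or φ ψ => M.Sat w φ ∨ M.Sat w ψ
  | w, .not φ => ¬ M.Sat w φ
  | w, .imp φ ψ => M.Sat w φ → M.Sat w ψ
  | w, .box φ => ∀ y, M.R w y → M.Sat y φ

/-- `(M0,w0) →ₙ^{(P⁺,P⁻)} (M1,w1)`: every `(P⁺,P⁻)`-formula of depth ≤ n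
satisfied at `(M0,w0)` is satisfied at `(M1,w1)`. -/
def ModalArrow (Pp Pm : Finset ℕ) (n : ℕ) (M0 : KModel) (w0 : M0.W)
    (M1 : KModel) (w1 : M1.W) : Prop :=
  ∀ φ : ModalForm, φ.vpos ⊆ Pp → φ.vneg ⊆ Pm → φ.depth ≤ n →
    M0.Sat w0 φ → M1.Sat w1 φ

/-- p-morphism between frames. -/
def PMorphism (F G : KFrame) (f : F.W → G.W) : Prop :=
  (∀ x y, F.R x y → G.R (f x) (f y)) ∧
  (∀ x w, G.R (f x) w → ∃ z, F.R x z ∧ f z = w)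

/-- The class `C` of Kripke models enjoys `n`-IP. -/
def EnjoysIP (C : Set KModel) (n : ℕ) : Prop :=
  ∀ (Pp Pm : Finset ℕ) (M0 M1 : KModel), M0 ∈ C → M1 ∈ C →
    ∀ (w0 : M0.W) (w1 : M1.W), ModalArrow Pp Pm n M0 w0 M1 w1 →
      ∃ (F : KFrame) (wstar : F.W) (f0 : F.W → M0.W) (f1 : F.W → M1.W),
        (∀ V : F.W → ℕ → Prop, F.toModel V ∈ C) ∧
        PMorphism F M0.toKFrame f0 ∧
        PMorphism F M1.toKFrame f1 ∧
        f0 wstar = w0 ∧ f1 wstar = w1 ∧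
        ∀ x : F.W, ModalArrow Pp Pm 0 M0 (f0 x) M1 (f1 x)

/-- A world is final iff every successor is also a predecessor. -/
def KModel.Final (M : KModel) (w : M.W) : Prop := ∀ y, M.R w y → M.R y w

/-- The cluster of a world. -/
def KModel.cluster (M : KModel) (w : M.W) : Set M.W := {u | M.R w u ∧ M.R u w}

/-- Cluster `C0` of `M0` matches cluster `C1` of `M1`. -/
def Matches (Pp Pm : Finset ℕ) (M0 M1 : KModel) (C0 : Set M0.W) (C1 : Set M1.W) : Prop :=
  (∀ u0 ∈ C0, ∃ u1 ∈ C1, ModalArrow Pp Pm 0 M0 u0 M1 u1) ∧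
  (∀ u1 ∈ C1, ∃ u0 ∈ C0, ModalArrow Pp Pm 0 M0 u0 M1 u1)

/-- `φ` is satisfied at every world of every model in `C`. -/
def ValidOn (C : Set KModel) (φ : ModalForm) : Prop :=
  ∀ M ∈ C, ∀ w : M.W, M.Sat w φ


section ULIPAux

attribute [local instance] Classical.propDecidable

open ModalForm

/-- finite conjunction -/
def bigAnd : List ModalForm → ModalForm
  | [] => .not .bot
  | χ :: l => .and χ (bigAnd l)

/-- finite disjunction -/
def bigOr : List ModalForm → ModalForm
  | [] => .bot
  | χ :: l => .or χ (bigOr l)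

lemma sat_bigAnd (M : KModel) (w : M.W) :
    ∀ l : List ModalForm, M.Sat w (bigAnd l) ↔ ∀ χ ∈ l, M.Sat w χ
  | [] => by simp [bigAnd, KModel.Sat]
  | χ :: l => by simp [bigAnd, KModel.Sat, sat_bigAnd M w l]

lemma sat_bigOr (M : KModel) (w : M.W) :
    ∀ l : List ModalForm, M.Sat w (bigOr l) ↔ ∃ χ ∈ l, M.Sat w χ
  | [] => by simp [bigOr, KModel.Sat]
  | χ :: l => by simp [bigOr, KModel.Sat, sat_bigOr M w l]

lemma vpos_bigAnd (S : Finset ℕ) :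
    ∀ l : List ModalForm, (∀ χ ∈ l, χ.vpos ⊆ S) → (bigAnd l).vpos ⊆ S
  | [], _ => by simp [bigAnd, ModalForm.vpos, ModalForm.vneg]
  | χ :: l, h => by
      simp only [bigAnd, ModalForm.vpos, Finset.union_subset_iff]
      exact ⟨h χ (by simp), vpos_bigAnd S l fun χ hχ => h χ (by simp [hχ])⟩

lemma vneg_bigAnd (S : Finset ℕ) :
    ∀ l : List ModalForm, (∀ χ ∈ l, χ.vneg ⊆ S) → (bigAnd l).vneg ⊆ S
  | [], _ => by simp [bigAnd, ModalForm.vpos, ModalForm.vneg]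
  | χ :: l, h => by
      simp only [bigAnd, ModalForm.vneg, Finset.union_subset_iff]
      exact ⟨h χ (by simp), vneg_bigAnd S l fun χ hχ => h χ (by simp [hχ])⟩

lemma vpos_bigOr (S : Finset ℕ) :
    ∀ l : List ModalForm, (∀ χ ∈ l, χ.vpos ⊆ S) → (bigOr l).vpos ⊆ S
  | [], _ => by simp [bigOr, ModalForm.vpos]
  | χ :: l, h => by
      simp only [bigOr, ModalForm.vpos, Finset.union_subset_iff]
      exact ⟨h χ (by simp), vpos_bigOr S l fun χ hχ => h χ (by simp [hχ])⟩

lemma vneg_bigOr (S : Finset ℕ) :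
    ∀ l : List ModalForm, (∀ χ ∈ l, χ.vneg ⊆ S) → (bigOr l).vneg ⊆ S
  | [], _ => by simp [bigOr, ModalForm.vneg]
  | χ :: l, h => by
      simp only [bigOr, ModalForm.vneg, Finset.union_subset_iff]
      exact ⟨h χ (by simp), vneg_bigOr S l fun χ hχ => h χ (by simp [hχ])⟩

/-- conjunction over a finset -/
noncomputable def andF (s : Finset ModalForm) : ModalForm := bigAnd s.toList
/-- disjunction over a finset -/
noncomputable def orF (s : Finset ModalForm) : ModalForm := bigOr s.toList

lemma sat_andF (M : KModel) (w : M.W) (s : Finset ModalForm) :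
    M.Sat w (andF s) ↔ ∀ χ ∈ s, M.Sat w χ := by
  simp [andF, sat_bigAnd, Finset.mem_toList]

lemma sat_orF (M : KModel) (w : M.W) (s : Finset ModalForm) :
    M.Sat w (orF s) ↔ ∃ χ ∈ s, M.Sat w χ := by
  simp [orF, sat_bigOr, Finset.mem_toList]

lemma vpos_andF (S : Finset ℕ) (s : Finset ModalForm) (h : ∀ χ ∈ s, χ.vpos ⊆ S) :
    (andF s).vpos ⊆ S :=
  vpos_bigAnd S _ fun χ hχ => h χ (Finset.mem_toList.1 hχ)

lemma vneg_andF (S : Finset ℕ) (s : Finset ModalForm) (h : ∀ χ ∈ s, χ.vneg ⊆ S) :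
    (andF s).vneg ⊆ S :=
  vneg_bigAnd S _ fun χ hχ => h χ (Finset.mem_toList.1 hχ)

lemma vpos_orF (S : Finset ℕ) (s : Finset ModalForm) (h : ∀ χ ∈ s, χ.vpos ⊆ S) :
    (orF s).vpos ⊆ S :=
  vpos_bigOr S _ fun χ hχ => h χ (Finset.mem_toList.1 hχ)

lemma vneg_orF (S : Finset ℕ) (s : Finset ModalForm) (h : ∀ χ ∈ s, χ.vneg ⊆ S) :
    (orF s).vneg ⊆ S :=
  vneg_bigOr S _ fun χ hχ => h χ (Finset.mem_toList.1 hχ)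

lemma vpos_dia (a : ModalForm) : a.dia.vpos = a.vpos := by
  simp [ModalForm.dia, ModalForm.vpos, ModalForm.vneg]

lemma vneg_dia (a : ModalForm) : a.dia.vneg = a.vneg := by
  simp [ModalForm.dia, ModalForm.vpos, ModalForm.vneg]

lemma vpos_and (a b : ModalForm) : (a.and b).vpos = a.vpos ∪ b.vpos := by
  simp [ModalForm.vpos]

lemma vneg_and (a b : ModalForm) : (a.and b).vneg = a.vneg ∪ b.vneg := by
  simp [ModalForm.vneg]

lemma vpos_box (a : ModalForm) : a.box.vpos = a.vpos := by simp [ModalForm.vpos]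

lemma vneg_box (a : ModalForm) : a.box.vneg = a.vneg := by simp [ModalForm.vneg]

lemma sat_dia (M : KModel) (w : M.W) (a : ModalForm) :
    M.Sat w a.dia ↔ ∃ y, M.R w y ∧ M.Sat y a := by
  simp [ModalForm.dia, KModel.Sat]

/-- depth-0 characteristic formula of `(M,w)` over `(Sp, Sm)` -/
noncomputable def char0 (Sp Sm : Finset ℕ) (M : KModel) (w : M.W) : ModalForm :=
  .and (andF ((Sp.filter fun p => M.val w p).image .var))
       (andF ((Sm.filter fun p => ¬ M.val w p).image fun p => .not (.var p)))

/-- all possible depth-0 characteristic formulas -/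
noncomputable def Forms0 (Sp Sm : Finset ℕ) : Finset ModalForm :=
  (Sp.powerset ×ˢ Sm.powerset).image fun AB =>
    .and (andF (AB.1.image .var)) (andF (AB.2.image fun p => .not (.var p)))

lemma char0_mem (Sp Sm : Finset ℕ) (M : KModel) (w : M.W) :
    char0 Sp Sm M w ∈ Forms0 Sp Sm := by
  refine Finset.mem_image.2 ⟨(Sp.filter fun p => M.val w p, Sm.filter fun p => ¬ M.val w p),
    Finset.mem_product.2 ⟨?_, ?_⟩, rfl⟩
  · exact Finset.mem_powerset.2 (Finset.filter_subset _ _)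
  · exact Finset.mem_powerset.2 (Finset.filter_subset _ _)

/-- building block of characteristic formulas -/
noncomputable def buildC (b : ModalForm) (s : Finset ModalForm) : ModalForm :=
  .and b (.and (andF (s.image ModalForm.dia)) (.box (orF s)))

/-- `(stage Sp Sm n).1` is the (finite) set of candidate depth-`n` characteristic
formulas, `(stage Sp Sm n).2 M w` is the depth-`n` characteristic formula of `(M,w)`. -/
noncomputable def stage (Sp Sm : Finset ℕ) :
    ℕ → Finset ModalForm × ((M : KModel) → M.W → ModalForm)
  | 0 => (Forms0 Sp Sm, char0 Sp Sm)
  | n + 1 =>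
      ((Forms0 Sp Sm ×ˢ (stage Sp Sm n).1.powerset).image fun bs => buildC bs.1 bs.2,
       fun M w => buildC (char0 Sp Sm M w)
         (((stage Sp Sm n).1).filter fun γ => ∃ v, M.R w v ∧ (stage Sp Sm n).2 M v = γ))

lemma char_mem (Sp Sm : Finset ℕ) : ∀ (n : ℕ) (M : KModel) (w : M.W),
    (stage Sp Sm n).2 M w ∈ (stage Sp Sm n).1
  | 0, M, w => char0_mem Sp Sm M w
  | n + 1, M, w => by
      refine Finset.mem_image.2 ⟨(char0 Sp Sm M w, _), Finset.mem_product.2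
        ⟨char0_mem Sp Sm M w, Finset.mem_powerset.2 (Finset.filter_subset _ _)⟩, rfl⟩

lemma char0_vpos (Sp Sm : Finset ℕ) (M : KModel) (w : M.W) :
    (char0 Sp Sm M w).vpos ⊆ Sp := by
  simp only [char0, ModalForm.vpos, Finset.union_subset_iff]
  constructor
  · refine vpos_andF _ _ fun χ hχ => ?_
    obtain ⟨p, hp, rfl⟩ := Finset.mem_image.1 hχ
    simp only [ModalForm.vpos, Finset.singleton_subset_iff]
    exact Finset.mem_of_mem_filter p hp
  · refine vpos_andF _ _ fun χ hχ => ?_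
    obtain ⟨p, hp, rfl⟩ := Finset.mem_image.1 hχ
    simp [ModalForm.vneg, ModalForm.vpos]

lemma char0_vneg (Sp Sm : Finset ℕ) (M : KModel) (w : M.W) :
    (char0 Sp Sm M w).vneg ⊆ Sm := by
  simp only [char0, ModalForm.vneg, Finset.union_subset_iff]
  constructor
  · refine vneg_andF _ _ fun χ hχ => ?_
    obtain ⟨p, hp, rfl⟩ := Finset.mem_image.1 hχ
    simp [ModalForm.vneg, ModalForm.vpos]
  · refine vneg_andF _ _ fun χ hχ => ?_
    obtain ⟨p, hp, rfl⟩ := Finset.mem_image.1 hχ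
    simp only [ModalForm.vpos, ModalForm.vneg, Finset.singleton_subset_iff]
    exact Finset.mem_of_mem_filter p hp

lemma char_vpos (Sp Sm : Finset ℕ) : ∀ (n : ℕ) (M : KModel) (w : M.W),
    ((stage Sp Sm n).2 M w).vpos ⊆ Sp ∧ ((stage Sp Sm n).2 M w).vneg ⊆ Sm
  | 0, M, w => ⟨char0_vpos Sp Sm M w, char0_vneg Sp Sm M w⟩
  | n + 1, M, w => by
      have key : ∀ γ ∈ ((stage Sp Sm n).1).filter
          (fun γ => ∃ v, M.R w v ∧ (stage Sp Sm n).2 M v = γ), γ.vpos ⊆ Sp ∧ γ.vneg ⊆ Sm := by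
        intro γ hγ
        obtain ⟨-, v, -, rfl⟩ := Finset.mem_filter.1 hγ
        exact char_vpos Sp Sm n M v
      have hst : (stage Sp Sm (n + 1)).2 M w = buildC (char0 Sp Sm M w)
          (((stage Sp Sm n).1).filter fun γ => ∃ v, M.R w v ∧ (stage Sp Sm n).2 M v = γ) := rfl
      rw [hst]
      constructor
      · simp only [buildC]
        rw [vpos_and, vpos_and, vpos_box]
        simp only [Finset.union_subset_iff]
        refine ⟨char0_vpos Sp Sm M w, ?_, ?_⟩
        · refine vpos_andF _ _ fun χ hχ => ?_
          obtain ⟨γ, hγ, rfl⟩ := Finset.mem_image.1 hχ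
          rw [vpos_dia]
          exact (key γ hγ).1
        · exact vpos_orF _ _ fun γ hγ => (key γ hγ).1
      · simp only [buildC]
        rw [vneg_and, vneg_and, vneg_box]
        simp only [Finset.union_subset_iff]
        refine ⟨char0_vneg Sp Sm M w, ?_, ?_⟩
        · refine vneg_andF _ _ fun χ hχ => ?_
          obtain ⟨γ, hγ, rfl⟩ := Finset.mem_image.1 hχ
          rw [vneg_dia]
          exact (key γ hγ).2
        · exact vneg_orF _ _ fun γ hγ => (key γ hγ).2

lemma sat_char0_self (Sp Sm : Finset ℕ) (M : KModel) (w : M.W) :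
    M.Sat w (char0 Sp Sm M w) := by
  refine ⟨(sat_andF M w _).2 fun χ hχ => ?_, (sat_andF M w _).2 fun χ hχ => ?_⟩
  · obtain ⟨p, hp, rfl⟩ := Finset.mem_image.1 hχ
    exact (Finset.mem_filter.1 hp).2
  · obtain ⟨p, hp, rfl⟩ := Finset.mem_image.1 hχ
    exact (Finset.mem_filter.1 hp).2

lemma sat_char_self (Sp Sm : Finset ℕ) : ∀ (n : ℕ) (M : KModel) (w : M.W),
    M.Sat w ((stage Sp Sm n).2 M w)
  | 0, M, w => sat_char0_self Sp Sm M w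
  | n + 1, M, w => by
      refine ⟨sat_char0_self Sp Sm M w, (sat_andF M w _).2 fun χ hχ => ?_, ?_⟩
      · obtain ⟨γ, hγ, rfl⟩ := Finset.mem_image.1 hχ
        obtain ⟨-, v, hv, rfl⟩ := Finset.mem_filter.1 hγ
        exact (sat_dia M w _).2 ⟨v, hv, sat_char_self Sp Sm n M v⟩
      · intro y hy
        refine (sat_orF M y _).2 ⟨(stage Sp Sm n).2 M y, Finset.mem_filter.2
          ⟨char_mem Sp Sm n M y, y, hy, rfl⟩, sat_char_self Sp Sm n M y⟩

lemma sat_char0_of_char (Sp Sm : Finset ℕ) : ∀ (n : ℕ) (M N : KModel) (w : M.W) (v : N.W),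
    N.Sat v ((stage Sp Sm n).2 M w) → N.Sat v (char0 Sp Sm M w)
  | 0, M, N, w, v, hs => hs
  | n + 1, M, N, w, v, hs => hs.1

lemma char0_facts (Sp Sm : Finset ℕ) (M N : KModel) (w : M.W) (v : N.W)
    (hs : N.Sat v (char0 Sp Sm M w)) :
    (∀ p ∈ Sp, M.val w p → N.val v p) ∧ (∀ p ∈ Sm, N.val v p → M.val w p) := by
  obtain ⟨h1, h2⟩ := hs
  constructor
  · intro p hp hv
    exact (sat_andF N v _).1 h1 (.var p)
      (Finset.mem_image.2 ⟨p, Finset.mem_filter.2 ⟨hp, hv⟩, rfl⟩)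
  · intro p hp
    by_contra hcon
    push_neg at hcon
    exact (sat_andF N v _).1 h2 (.not (.var p))
      (Finset.mem_image.2 ⟨p, Finset.mem_filter.2 ⟨hp, hcon.2⟩, rfl⟩) hcon.1

lemma char_succ_facts (Sp Sm : Finset ℕ) (n : ℕ) (M N : KModel) (w : M.W) (v : N.W)
    (hs : N.Sat v ((stage Sp Sm (n + 1)).2 M w)) :
    (∀ w', M.R w w' → ∃ v', N.R v v' ∧ N.Sat v' ((stage Sp Sm n).2 M w')) ∧
    (∀ v', N.R v v' → ∃ w', M.R w w' ∧ N.Sat v' ((stage Sp Sm n).2 M w')) := by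
  obtain ⟨-, hdia, hbox⟩ := hs
  constructor
  · intro w' hw'
    have hmem : ((stage Sp Sm n).2 M w').dia ∈
        (((stage Sp Sm n).1).filter fun γ => ∃ u, M.R w u ∧ (stage Sp Sm n).2 M u = γ).image
          ModalForm.dia :=
      Finset.mem_image.2 ⟨_, Finset.mem_filter.2 ⟨char_mem Sp Sm n M w', w', hw', rfl⟩, rfl⟩
    have := (sat_dia N v _).1 ((sat_andF N v _).1 hdia _ hmem)
    obtain ⟨v', hv', hsat⟩ := this
    exact ⟨v', hv', hsat⟩
  · intro v' hv'
    have := (sat_orF N v' _).1 (hbox v' hv')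
    obtain ⟨γ, hγ, hsat⟩ := this
    obtain ⟨-, w', hw', rfl⟩ := Finset.mem_filter.1 hγ
    exact ⟨w', hw', hsat⟩

lemma adequacy (Sp Sm : Finset ℕ) (χ : ModalForm) :
    ∀ (n : ℕ) (M N : KModel) (w : M.W) (v : N.W),
      N.Sat v ((stage Sp Sm n).2 M w) → χ.depth ≤ n →
      ((χ.vpos ⊆ Sp → χ.vneg ⊆ Sm → M.Sat w χ → N.Sat v χ) ∧
       (χ.vpos ⊆ Sm → χ.vneg ⊆ Sp → N.Sat v χ → M.Sat w χ)) := by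
  induction χ with
  | var p =>
      intro n M N w v hs _
      have h0 := char0_facts Sp Sm M N w v (sat_char0_of_char Sp Sm n M N w v hs)
      constructor
      · intro hp _ hw
        exact h0.1 p (by simpa [ModalForm.vpos] using hp) hw
      · intro hp _ hv
        exact h0.2 p (by simpa [ModalForm.vpos] using hp) hv
  | bot =>
      intro n M N w v _ _
      exact ⟨fun _ _ hw => hw.elim, fun _ _ hv => hv.elim⟩
  | and a b iha ihb =>
      intro n M N w v hs hd
      simp only [ModalForm.depth, max_le_iff] at hd
      simp only [ModalForm.vpos, ModalForm.vneg, Finset.union_subset_iff]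
      have Ha := iha n M N w v hs hd.1
      have Hb := ihb n M N w v hs hd.2
      exact ⟨fun hp hm h => ⟨Ha.1 hp.1 hm.1 h.1, Hb.1 hp.2 hm.2 h.2⟩,
             fun hp hm h => ⟨Ha.2 hp.1 hm.1 h.1, Hb.2 hp.2 hm.2 h.2⟩⟩
  | or a b iha ihb =>
      intro n M N w v hs hd
      simp only [ModalForm.depth, max_le_iff] at hd
      simp only [ModalForm.vpos, ModalForm.vneg, Finset.union_subset_iff]
      have Ha := iha n M N w v hs hd.1
      have Hb := ihb n M N w v hs hd.2
      exact ⟨fun hp hm h => h.elim (fun h => Or.inl (Ha.1 hp.1 hm.1 h))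
               (fun h => Or.inr (Hb.1 hp.2 hm.2 h)),
             fun hp hm h => h.elim (fun h => Or.inl (Ha.2 hp.1 hm.1 h))
               (fun h => Or.inr (Hb.2 hp.2 hm.2 h))⟩
  | not a iha =>
      intro n M N w v hs hd
      simp only [ModalForm.depth] at hd
      simp only [ModalForm.vpos, ModalForm.vneg]
      have Ha := iha n M N w v hs hd
      exact ⟨fun hp hm h hv => h (Ha.2 hm hp hv),
             fun hp hm h hw => h (Ha.1 hm hp hw)⟩
  | imp a b iha ihb =>
      intro n M N w v hs hd
      simp only [ModalForm.depth, max_le_iff] at hd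
      simp only [ModalForm.vpos, ModalForm.vneg, Finset.union_subset_iff]
      have Ha := iha n M N w v hs hd.1
      have Hb := ihb n M N w v hs hd.2
      exact ⟨fun hp hm h hv => Hb.1 hp.2 hm.2 (h (Ha.2 hm.1 hp.1 hv)),
             fun hp hm h hw => Hb.2 hp.2 hm.2 (h (Ha.1 hm.1 hp.1 hw))⟩
  | box a iha =>
      intro n M N w v hs hd
      simp only [ModalForm.depth] at hd
      obtain ⟨m, rfl⟩ : ∃ m, n = m + 1 := ⟨n - 1, by omega⟩
      have hd' : a.depth ≤ m := by omega
      have hfacts := char_succ_facts Sp Sm m M N w v hs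
      simp only [ModalForm.vpos, ModalForm.vneg]
      constructor
      · intro hp hm hw v' hv'
        obtain ⟨w', hw', hs'⟩ := hfacts.2 v' hv'
        exact (iha m M N w' v' hs' hd').1 hp hm (hw w' hw')
      · intro hp hm hv w' hw'
        obtain ⟨v', hv', hs'⟩ := hfacts.1 w' hw'
        exact (iha m M N w' v' hs' hd').2 hp hm (hv v' hv')

lemma arrow_of_char (Sp Sm : Finset ℕ) (n : ℕ) (M N : KModel) (w : M.W) (v : N.W)
    (hs : N.Sat v ((stage Sp Sm n).2 M w)) : ModalArrow Sp Sm n M w N v :=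
  fun χ hp hm hd hw => (adequacy Sp Sm χ n M N w v hs hd).1 hp hm hw

lemma transfer (F : KFrame) (V : F.W → ℕ → Prop) (N : KModel) (f : F.W → N.W)
    (hpm : PMorphism F N.toKFrame f) (Up Um : ℕ → Prop)
    (hp : ∀ x p, Up p → V x p → N.val (f x) p)
    (hm : ∀ x p, Um p → N.val (f x) p → V x p) (χ : ModalForm) :
    ((∀ p ∈ χ.vpos, Up p) → (∀ p ∈ χ.vneg, Um p) →
        ∀ x, (F.toModel V).Sat x χ → N.Sat (f x) χ) ∧
    ((∀ p ∈ χ.vpos, Um p) → (∀ p ∈ χ.vneg, Up p) →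
        ∀ x, N.Sat (f x) χ → (F.toModel V).Sat x χ) := by
  induction χ with
  | var p =>
      constructor
      · intro h1 _ x hx
        exact hp x p (h1 p (by simp [ModalForm.vpos])) hx
      · intro h1 _ x hx
        exact hm x p (h1 p (by simp [ModalForm.vpos])) hx
  | bot => exact ⟨fun _ _ x hx => hx.elim, fun _ _ x hx => hx.elim⟩
  | and a b iha ihb =>
      simp only [ModalForm.vpos, ModalForm.vneg, Finset.mem_union]
      constructor
      · intro h1 h2 x hx
        exact ⟨iha.1 (fun p hp' => h1 p (Or.inl hp')) (fun p hp' => h2 p (Or.inl hp')) x hx.1,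
               ihb.1 (fun p hp' => h1 p (Or.inr hp')) (fun p hp' => h2 p (Or.inr hp')) x hx.2⟩
      · intro h1 h2 x hx
        exact ⟨iha.2 (fun p hp' => h1 p (Or.inl hp')) (fun p hp' => h2 p (Or.inl hp')) x hx.1,
               ihb.2 (fun p hp' => h1 p (Or.inr hp')) (fun p hp' => h2 p (Or.inr hp')) x hx.2⟩
  | or a b iha ihb =>
      simp only [ModalForm.vpos, ModalForm.vneg, Finset.mem_union]
      constructor
      · intro h1 h2 x hx
        exact hx.elim
          (fun hx => Or.inl (iha.1 (fun p hp' => h1 p (Or.inl hp'))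
            (fun p hp' => h2 p (Or.inl hp')) x hx))
          (fun hx => Or.inr (ihb.1 (fun p hp' => h1 p (Or.inr hp'))
            (fun p hp' => h2 p (Or.inr hp')) x hx))
      · intro h1 h2 x hx
        exact hx.elim
          (fun hx => Or.inl (iha.2 (fun p hp' => h1 p (Or.inl hp'))
            (fun p hp' => h2 p (Or.inl hp')) x hx))
          (fun hx => Or.inr (ihb.2 (fun p hp' => h1 p (Or.inr hp'))
            (fun p hp' => h2 p (Or.inr hp')) x hx))
  | not a iha =>
      simp only [ModalForm.vpos, ModalForm.vneg]
      exact ⟨fun h1 h2 x hx hc => hx (iha.2 h2 h1 x hc),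
             fun h1 h2 x hx hc => hx (iha.1 h2 h1 x hc)⟩
  | imp a b iha ihb =>
      simp only [ModalForm.vpos, ModalForm.vneg, Finset.mem_union]
      constructor
      · intro h1 h2 x hx ha
        exact ihb.1 (fun p hp' => h1 p (Or.inr hp')) (fun p hp' => h2 p (Or.inr hp')) x
          (hx (iha.2 (fun p hp' => h2 p (Or.inl hp')) (fun p hp' => h1 p (Or.inl hp')) x ha))
      · intro h1 h2 x hx ha
        exact ihb.2 (fun p hp' => h1 p (Or.inr hp')) (fun p hp' => h2 p (Or.inr hp')) x
          (hx (iha.1 (fun p hp' => h2 p (Or.inl hp')) (fun p hp' => h1 p (Or.inl hp')) x ha))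
  | box a iha =>
      simp only [ModalForm.vpos, ModalForm.vneg]
      constructor
      · intro h1 h2 x hx y hy
        obtain ⟨z, hz, rfl⟩ := hpm.2 x y hy
        exact iha.1 h1 h2 z (hx z hz)
      · intro h1 h2 x hx z hz
        exact iha.2 h1 h2 z (hx (f z) (hpm.1 x z hz))

end ULIPAux

theorem stmt3 (C : Set KModel) (n : ℕ) (h : EnjoysIP C n)
    (φ : ModalForm) (Pp Pm : Finset ℕ) :
    ∃ θ : ModalForm,
      ValidOn C (φ.imp θ) ∧
      θ.vpos ⊆ φ.vpos \ Pp ∧ θ.vneg ⊆ φ.vneg \ Pm ∧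
      ∀ ψ : ModalForm, ValidOn C (φ.imp ψ) →
        Disjoint ψ.vpos Pp → Disjoint ψ.vneg Pm →
        ValidOn C (θ.imp ψ) := by
  classical
  set Sp : Finset ℕ := φ.vpos \ Pp with hSpdef
  set Sm : Finset ℕ := φ.vneg \ Pm with hSmdef
  set D : Finset ModalForm := ((stage Sp Sm n).1).filter
    (fun γ => ∃ M0 : KModel, M0 ∈ C ∧ ∃ w0 : M0.W, M0.Sat w0 φ ∧ (stage Sp Sm n).2 M0 w0 = γ)
    with hDdef
  refine ⟨orF D, ?_, ?_, ?_, ?_⟩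
  · -- φ → θ valid
    intro M hM w hw
    refine (sat_orF M w D).2 ⟨(stage Sp Sm n).2 M w, ?_, sat_char_self Sp Sm n M w⟩
    exact Finset.mem_filter.2 ⟨char_mem Sp Sm n M w, M, hM, w, hw, rfl⟩
  · -- vpos
    refine vpos_orF Sp D fun γ hγ => ?_
    obtain ⟨-, M0, -, w0, -, rfl⟩ := Finset.mem_filter.1 hγ
    exact (char_vpos Sp Sm n M0 w0).1
  · -- vneg
    refine vneg_orF Sm D fun γ hγ => ?_
    obtain ⟨-, M0, -, w0, -, rfl⟩ := Finset.mem_filter.1 hγ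
    exact (char_vpos Sp Sm n M0 w0).2
  · -- main clause
    intro ψ hψ hdp hdm M1 hM1 w1 hθ
    obtain ⟨γ, hγD, hγsat⟩ := (sat_orF M1 w1 D).1 hθ
    obtain ⟨-, M0, hM0, w0, hφ0, rfl⟩ := Finset.mem_filter.1 hγD
    have harrow : ModalArrow Sp Sm n M0 w0 M1 w1 :=
      arrow_of_char Sp Sm n M0 M1 w0 w1 hγsat
    obtain ⟨F, wstar, f0, f1, hCV, hpm0, hpm1, hf0, hf1, harr0⟩ :=
      h Sp Sm M0 M1 hM0 hM1 w0 w1 harrow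
    -- variable-level transfer facts
    have ain : ∀ (x : F.W) (p : ℕ), p ∈ Sp → M0.val (f0 x) p → M1.val (f1 x) p := by
      intro x p hp hv
      exact harr0 x (.var p) (by simpa [ModalForm.vpos] using hp)
        (by simp [ModalForm.vneg]) (by simp [ModalForm.depth]) hv
    have aout : ∀ (x : F.W) (p : ℕ), p ∈ Sm → M1.val (f1 x) p → M0.val (f0 x) p := by
      intro x p hp hv
      by_contra hcon
      exact harr0 x (.not (.var p)) (by simp [ModalForm.vpos, ModalForm.vneg])
        (by simpa [ModalForm.vpos, ModalForm.vneg] using hp)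
        (by simp [ModalForm.depth]) hcon hv
    have hψp : ∀ p ∈ ψ.vpos, p ∉ Pp := fun p hp => Finset.disjoint_left.1 hdp hp
    have hψm : ∀ p ∈ ψ.vneg, p ∉ Pm := fun p hp => Finset.disjoint_left.1 hdm hp
    -- the mixed valuation
    set V : F.W → ℕ → Prop := fun x p =>
      if p ∈ ψ.vpos then
        (if p ∈ φ.vneg ∧ p ∉ Sm then M0.val (f0 x) p ∧ M1.val (f1 x) p else M1.val (f1 x) p)
      else if p ∈ ψ.vneg then
        (if p ∈ φ.vpos ∧ p ∉ Sp then M0.val (f0 x) p ∨ M1.val (f1 x) p else M1.val (f1 x) p)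
      else M0.val (f0 x) p with hVdef
    have P1 : ∀ (x : F.W), ∀ p ∈ φ.vpos, M0.val (f0 x) p → V x p := by
      intro x p hp hv
      by_cases h1 : p ∈ ψ.vpos
      · have hsp : p ∈ Sp := Finset.mem_sdiff.2 ⟨hp, hψp p h1⟩
        by_cases h2 : p ∈ φ.vneg ∧ p ∉ Sm
        · simp only [hVdef, if_pos h1, if_pos h2]
          exact ⟨hv, ain x p hsp hv⟩
        · simp only [hVdef, if_pos h1, if_neg h2]
          exact ain x p hsp hv
      · by_cases h3 : p ∈ ψ.vneg
        · by_cases h2 : p ∈ φ.vpos ∧ p ∉ Sp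
          · simp only [hVdef, if_neg h1, if_pos h3, if_pos h2]
            exact Or.inl hv
          · have hsp : p ∈ Sp := by
              by_contra hc
              exact h2 ⟨hp, hc⟩
            simp only [hVdef, if_neg h1, if_pos h3, if_neg h2]
            exact ain x p hsp hv
        · simp only [hVdef, if_neg h1, if_neg h3]
          exact hv
    have P2 : ∀ (x : F.W), ∀ p ∈ φ.vneg, V x p → M0.val (f0 x) p := by
      intro x p hp hv
      by_cases h1 : p ∈ ψ.vpos
      · by_cases h2 : p ∈ φ.vneg ∧ p ∉ Sm
        · simp only [hVdef, if_pos h1, if_pos h2] at hv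
          exact hv.1
        · have hsm : p ∈ Sm := by
            by_contra hc
            exact h2 ⟨hp, hc⟩
          simp only [hVdef, if_pos h1, if_neg h2] at hv
          exact aout x p hsm hv
      · by_cases h3 : p ∈ ψ.vneg
        · have hsm : p ∈ Sm := Finset.mem_sdiff.2 ⟨hp, hψm p h3⟩
          by_cases h2 : p ∈ φ.vpos ∧ p ∉ Sp
          · simp only [hVdef, if_neg h1, if_pos h3, if_pos h2] at hv
            exact hv.elim id (aout x p hsm)
          · simp only [hVdef, if_neg h1, if_pos h3, if_neg h2] at hv
            exact aout x p hsm hv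
        · simpa only [hVdef, if_neg h1, if_neg h3] using hv
    have P3 : ∀ (x : F.W), ∀ p ∈ ψ.vpos, V x p → M1.val (f1 x) p := by
      intro x p hp hv
      by_cases h2 : p ∈ φ.vneg ∧ p ∉ Sm
      · simp only [hVdef, if_pos hp, if_pos h2] at hv
        exact hv.2
      · simpa only [hVdef, if_pos hp, if_neg h2] using hv
    have P4 : ∀ (x : F.W), ∀ p ∈ ψ.vneg, M1.val (f1 x) p → V x p := by
      intro x p hp hv
      by_cases h1 : p ∈ ψ.vpos
      · have h2 : ¬ (p ∈ φ.vneg ∧ p ∉ Sm) := by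
          rintro ⟨hn, hns⟩
          exact hns (Finset.mem_sdiff.2 ⟨hn, hψm p hp⟩)
        simp only [hVdef, if_pos h1, if_neg h2]
        exact hv
      · by_cases h2 : p ∈ φ.vpos ∧ p ∉ Sp
        · simp only [hVdef, if_neg h1, if_pos hp, if_pos h2]
          exact Or.inr hv
        · simp only [hVdef, if_neg h1, if_pos hp, if_neg h2]
          exact hv
    -- the interpolating model
    have hMstar : F.toModel V ∈ C := hCV V
    have hsatφ : (F.toModel V).Sat wstar φ := by
      have := (transfer F V M0 f0 hpm0
        (fun p => ∀ x, V x p → M0.val (f0 x) p)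
        (fun p => ∀ x, M0.val (f0 x) p → V x p)
        (fun x p hp' => hp' x) (fun x p hp' => hp' x) φ).2
        (fun p hp x => P1 x p hp) (fun p hp x => P2 x p hp) wstar
      apply this
      rw [hf0]
      exact hφ0
    have hsatψ : (F.toModel V).Sat wstar ψ := hψ (F.toModel V) hMstar wstar hsatφ
    have := (transfer F V M1 f1 hpm1
      (fun p => ∀ x, V x p → M1.val (f1 x) p)
      (fun p => ∀ x, M1.val (f1 x) p → V x p)
      (fun x p hp' => hp' x) (fun x p hp' => hp' x) ψ).1
      (fun p hp x => P3 x p hp) (fun p hp x => P4 x p hp) wstar hsatψ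
    rwa [hf1] at this
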